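/- Let D be the product of n probability simplices Δ_{|Y_1|} × ... × Δ_{|Y_n|}, and let A be the matrix whose column indexed by (i,y) is ψ_i(y)/(λn) with ‖ψ_i(y)‖₂ ≤ R. Then for the structural SVM dual objective f(α) = (λ/2)‖Aα‖² − b^Tα, the curvature constant Cf satisfies Cf ≤ 4R²/λ. -/

import Mathlib

open RealInnerProductSpace

/-- For the structural SVM dual objective over the product of probability
simplices, with feature columns `ψᵢ(y)/(λn)` of norm `‖ψᵢ(y)‖ ≤ R`, the
curvature constant satisfies `Cf ≤ 4R²/λ`. -/
theorem svm_curvature_bound {d n : ℕ} (hn : 1 ≤ n)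
    (lam R : ℝ) (hlam : 0 < lam)
    (k : Fin n → ℕ) (hk : ∀ i, 1 ≤ k i)
    (ψ : ∀ i : Fin n, Fin (k i) → EuclideanSpace ℝ (Fin d))
    (L : ∀ i : Fin n, Fin (k i) → ℝ)
    (hR : ∀ i y, ‖ψ i y‖ ≤ R)
    (Amul : (∀ i : Fin n, Fin (k i) → ℝ) → EuclideanSpace ℝ (Fin d))
    (hAmul : ∀ α, Amul α = ∑ i, ∑ y, (α i y / (lam * n)) • ψ i y)
    (f : (∀ i : Fin n, Fin (k i) → ℝ) → ℝ)
    (hf : ∀ α, f α = lam / 2 * ‖Amul α‖ ^ 2 - ∑ i, ∑ y, (L i y / n) * α i y)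
    (gradf : (∀ i : Fin n, Fin (k i) → ℝ) → (∀ i : Fin n, Fin (k i) → ℝ))
    (hgrad : ∀ α i y, gradf α i y = lam * (⟪Amul α, ψ i y⟫ / (lam * n)) - L i y / n)
    (Dset : Set (∀ i : Fin n, Fin (k i) → ℝ))
    (hD : Dset = {α | ∀ i, α i ∈ stdSimplex ℝ (Fin (k i))})
    (Cf : ℝ)
    (hCf : Cf = sSup {c : ℝ | ∃ x ∈ Dset, ∃ s ∈ Dset, ∃ γ ∈ Set.Ioc (0 : ℝ) 1,
        c = 2 / γ ^ 2 * (f (x + γ • (s - x)) - f x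
              - ∑ i, ∑ y, ((x + γ • (s - x) - x) i y) * gradf x i y)}) :
    Cf ≤ 4 * R ^ 2 / lam := by
  have hn0 : (0:ℝ) < n := by exact_mod_cast hn
  have hlamn : (0:ℝ) < lam * n := by positivity
  have hR0 : (0:ℝ) ≤ R := le_trans (norm_nonneg _) (hR ⟨0, hn⟩ ⟨0, hk _⟩)
  -- norm bound on Amul over the domain
  have hAle : ∀ α ∈ Dset, ‖Amul α‖ ≤ R / lam := by
    intro α hα
    rw [hD] at hα
    rw [hAmul]
    calc ‖∑ i, ∑ y, (α i y / (lam * n)) • ψ i y‖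
        ≤ ∑ i, ‖∑ y, (α i y / (lam * n)) • ψ i y‖ := norm_sum_le _ _
      _ ≤ ∑ i : Fin n, R / (lam * n) := by
          apply Finset.sum_le_sum
          intro i _
          calc ‖∑ y, (α i y / (lam * n)) • ψ i y‖
              ≤ ∑ y, ‖(α i y / (lam * n)) • ψ i y‖ := norm_sum_le _ _
            _ ≤ ∑ y, (α i y / (lam * n)) * R := by
                apply Finset.sum_le_sum
                intro y _
                rw [norm_smul, Real.norm_eq_abs,
                  abs_of_nonneg (div_nonneg ((hα i).1 y) hlamn.le)]
                exact mul_le_mul_of_nonneg_left (hR i y)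
                  (div_nonneg ((hα i).1 y) hlamn.le)
            _ = R / (lam * n) := by
                rw [← Finset.sum_mul, ← Finset.sum_div, (hα i).2]
                ring
      _ = R / lam := by
          rw [Finset.sum_const, Finset.card_univ, Fintype.card_fin, nsmul_eq_mul]
          field_simp
  rw [hCf]
  apply Real.sSup_le
  · rintro c ⟨x, hx, s, hs, γ, hγ, rfl⟩
    have hγ0 : (0:ℝ) < γ := hγ.1
    set u := Amul x with hu
    set v := Amul s with hv
    -- linearity of Amul on the segment
    have hlin : Amul (x + γ • (s - x)) = u + γ • (v - u) := by
      rw [hAmul, hu, hv, hAmul x, hAmul s, ← Finset.sum_sub_distrib, Finset.smul_sum,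
        ← Finset.sum_add_distrib]
      refine Finset.sum_congr rfl fun i _ => ?_
      rw [← Finset.sum_sub_distrib, Finset.smul_sum, ← Finset.sum_add_distrib]
      refine Finset.sum_congr rfl fun y _ => ?_
      simp only [Pi.add_apply, Pi.smul_apply, Pi.sub_apply, smul_eq_mul]
      match_scalars
      field_simp
    -- inner product expansion
    have hinner : ∀ α : ∀ i : Fin n, Fin (k i) → ℝ,
        ⟪u, Amul α⟫ = ∑ i, ∑ y, (α i y / (lam * n)) * ⟪u, ψ i y⟫ := by
      intro α
      rw [hAmul α, inner_sum]
      refine Finset.sum_congr rfl fun i _ => ?_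
      rw [inner_sum]
      exact Finset.sum_congr rfl fun y _ => real_inner_smul_right _ _ _
    -- gradient sum
    have hgsum : ∑ i, ∑ y, ((x + γ • (s - x) - x) i y) * gradf x i y
        = γ * (lam * ⟪u, v⟫ - lam * ⟪u, u⟫)
          - γ * (∑ i, ∑ y, (L i y / n) * s i y - ∑ i, ∑ y, (L i y / n) * x i y) := by
      have hv' : lam * ⟪u, v⟫ = ∑ i, ∑ y, s i y * (lam * (⟪u, ψ i y⟫ / (lam * n))) := by
        rw [hv, hinner s, Finset.mul_sum]
        refine Finset.sum_congr rfl fun i _ => ?_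
        rw [Finset.mul_sum]
        exact Finset.sum_congr rfl fun y _ => by ring
      have hu' : lam * ⟪u, u⟫ = ∑ i, ∑ y, x i y * (lam * (⟪u, ψ i y⟫ / (lam * n))) := by
        rw [hu, hinner x, Finset.mul_sum]
        refine Finset.sum_congr rfl fun i _ => ?_
        rw [Finset.mul_sum]
        exact Finset.sum_congr rfl fun y _ => by ring
      rw [hv', hu']
      simp only [hgrad, Pi.add_apply, Pi.smul_apply, Pi.sub_apply, smul_eq_mul, ← hu]
      rw [← Finset.sum_sub_distrib, ← Finset.sum_sub_distrib, Finset.mul_sum, Finset.mul_sum,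
        ← Finset.sum_sub_distrib]
      refine Finset.sum_congr rfl fun i _ => ?_
      rw [← Finset.sum_sub_distrib, ← Finset.sum_sub_distrib, Finset.mul_sum, Finset.mul_sum,
        ← Finset.sum_sub_distrib]
      exact Finset.sum_congr rfl fun y _ => by ring
    -- linear part of f on the segment
    have hlsum : ∑ i, ∑ y, (L i y / n) * ((x + γ • (s - x)) i y)
        = ∑ i, ∑ y, (L i y / n) * x i y
          + γ * (∑ i, ∑ y, (L i y / n) * s i y - ∑ i, ∑ y, (L i y / n) * x i y) := by
      rw [← Finset.sum_sub_distrib, Finset.mul_sum, ← Finset.sum_add_distrib]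
      refine Finset.sum_congr rfl fun i _ => ?_
      rw [← Finset.sum_sub_distrib, Finset.mul_sum, ← Finset.sum_add_distrib]
      refine Finset.sum_congr rfl fun y _ => ?_
      simp only [Pi.add_apply, Pi.smul_apply, Pi.sub_apply, smul_eq_mul]
      ring
    -- the bracket equals lam/2 * γ² * ‖v-u‖²
    have hbr : f (x + γ • (s - x)) - f x
        - ∑ i, ∑ y, ((x + γ • (s - x) - x) i y) * gradf x i y
        = lam / 2 * γ ^ 2 * ‖v - u‖ ^ 2 := by
      rw [hf, hf, hlin, hgsum, hlsum, ← hu]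
      have hexp : ‖u + γ • (v - u)‖ ^ 2
          = ‖u‖ ^ 2 + 2 * (γ * ⟪u, v - u⟫) + γ ^ 2 * ‖v - u‖ ^ 2 := by
        rw [norm_add_sq_real, real_inner_smul_right, norm_smul, Real.norm_eq_abs,
          mul_pow, sq_abs]
      rw [hexp]
      have hsub : ⟪u, v - u⟫ = ⟪u, v⟫ - ⟪u, u⟫ := inner_sub_right u v u
      rw [hsub]
      ring
    rw [hbr]
    have hw : ‖v - u‖ ≤ 2 * R / lam := by
      calc ‖v - u‖ ≤ ‖v‖ + ‖u‖ := norm_sub_le _ _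
        _ ≤ R / lam + R / lam := add_le_add (hAle s hs) (hAle x hx)
        _ = 2 * R / lam := by ring
    have hval : 2 / γ ^ 2 * (lam / 2 * γ ^ 2 * ‖v - u‖ ^ 2) = lam * ‖v - u‖ ^ 2 := by
      field_simp
    rw [hval]
    calc lam * ‖v - u‖ ^ 2 ≤ lam * (2 * R / lam) ^ 2 := by
          apply mul_le_mul_of_nonneg_left _ hlam.le
          exact pow_le_pow_left₀ (norm_nonneg _) hw 2
      _ = 4 * R ^ 2 / lam := by field_simp; ring
  · positivity
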